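/- Let r_B, r_C, r_G > 0 satisfy 4(b−a)M₁²M₂²(r_G + (b−a)r_C)r_B < 1, and let Q^{(1)}_{s,t}, Q^{(2)}_{s,t} be uniformly bounded strongly continuous families with bounds M₁, M₂. Then for all G ∈ L(X₁,X₂), C ∈ C_u([a,b];L(X₁,X₂)), B ∈ C_u([a,b];L(X₂,X₁)) with ‖G‖ ≤ r_G, ‖C‖_u ≤ r_C, ‖B‖_u ≤ r_B, the equation P(t) = Q^{(2)}_{b,t} G Q^{(1)}_{b,t} + ∫_t^b Q^{(2)}_{r,t}{C(r) − P(r)B(r)P(r)}Q^{(1)}_{r,t}dr has a unique solution P ∈ C_u([a,b]; L(X₁,X₂)), and it satisfies ‖P‖_u ≤ 2M₁M₂(r_G + (b−a)r_C). -/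

import Mathlib

open MeasureTheory intervalIntegral Set Filter Topology

namespace RiccatiAux

theorem strong_comp {X Y : Type*} [NormedAddCommGroup X] [NormedSpace ℝ X]
    [NormedAddCommGroup Y] [NormedSpace ℝ Y]
    {A : ℝ → X →L[ℝ] Y} {f : ℝ → X} {s : Set ℝ} {M : ℝ}
    (hA : ∀ x, ContinuousOn (fun t => A t x) s)
    (hM : ∀ t ∈ s, ‖A t‖ ≤ M)
    (hf : ContinuousOn f s) :
    ContinuousOn (fun t => A t (f t)) s := by
  intro t₀ ht₀
  have h1 : ContinuousWithinAt (fun t => A t (f t₀)) s t₀ := hA (f t₀) t₀ ht₀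
  have h2 : Tendsto (fun t => A t (f t) - A t (f t₀)) (𝓝[s] t₀) (𝓝 0) := by
    have hf0 : Tendsto (fun t => ‖f t - f t₀‖) (𝓝[s] t₀) (𝓝 0) := by
      have h := (hf t₀ ht₀).sub_const (f t₀)
      simpa using h.norm
    have hM0 : Tendsto (fun t => M * ‖f t - f t₀‖) (𝓝[s] t₀) (𝓝 0) := by
      simpa using hf0.const_mul M
    apply squeeze_zero_norm' _ hM0
    filter_upwards [self_mem_nhdsWithin] with t ht
    calc ‖A t (f t) - A t (f t₀)‖ = ‖A t (f t - f t₀)‖ := by rw [map_sub]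
      _ ≤ ‖A t‖ * ‖f t - f t₀‖ := (A t).le_opNorm _
      _ ≤ M * ‖f t - f t₀‖ :=
        mul_le_mul_of_nonneg_right (hM t ht) (norm_nonneg _)
  have h3 := h2.add h1
  simpa [ContinuousWithinAt] using h3

structure Setup (X₁ X₂ : Type*) [NormedAddCommGroup X₁] [NormedSpace ℝ X₁] [CompleteSpace X₁]
    [NormedAddCommGroup X₂] [NormedSpace ℝ X₂] [CompleteSpace X₂] where
  a : ℝ
  b : ℝ
  hab : a ≤ b
  Q1 : ℝ → ℝ → X₁ →L[ℝ] X₁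
  Q2 : ℝ → ℝ → X₂ →L[ℝ] X₂
  M₁ : ℝ
  M₂ : ℝ
  hQ1bdd : ∀ t s : ℝ, a ≤ t → t ≤ s → s ≤ b → ‖Q1 s t‖ ≤ M₁
  hQ2bdd : ∀ t s : ℝ, a ≤ t → t ≤ s → s ≤ b → ‖Q2 s t‖ ≤ M₂
  hQ1sc₁ : ∀ x : X₁, ∀ t ∈ Set.Icc a b, ContinuousOn (fun s => Q1 s t x) (Set.Icc t b)
  hQ1sc₂ : ∀ x : X₁, ∀ s ∈ Set.Icc a b, ContinuousOn (fun t => Q1 s t x) (Set.Icc a s)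
  hQ2sc₁ : ∀ y : X₂, ∀ t ∈ Set.Icc a b, ContinuousOn (fun s => Q2 s t y) (Set.Icc t b)
  hQ2sc₂ : ∀ y : X₂, ∀ s ∈ Set.Icc a b, ContinuousOn (fun t => Q2 s t y) (Set.Icc a s)
  B : ℝ → X₂ →L[ℝ] X₁
  hBsc : ∀ y : X₂, ContinuousOn (fun t => B t y) (Set.Icc a b)
  C : ℝ → X₁ →L[ℝ] X₂
  hCsc : ∀ x : X₁, ContinuousOn (fun t => C t x) (Set.Icc a b)
  G : X₁ →L[ℝ] X₂
  r_B : ℝ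
  r_C : ℝ
  r_G : ℝ
  hrB : 0 < r_B
  hrC : 0 < r_C
  hrG : 0 < r_G
  hG : ‖G‖ ≤ r_G
  hC : ∀ t ∈ Set.Icc a b, ‖C t‖ ≤ r_C
  hB : ∀ t ∈ Set.Icc a b, ‖B t‖ ≤ r_B
  hsmall : 4 * (b - a) * M₁ ^ 2 * M₂ ^ 2 * (r_G + (b - a) * r_C) * r_B < 1

namespace Setup

variable {X₁ X₂ : Type*} [NormedAddCommGroup X₁] [NormedSpace ℝ X₁] [CompleteSpace X₁]
    [NormedAddCommGroup X₂] [NormedSpace ℝ X₂] [CompleteSpace X₂]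
    (S : Setup X₁ X₂)

lemma M₁_nonneg : 0 ≤ S.M₁ :=
  le_trans (norm_nonneg _) (S.hQ1bdd S.a S.a le_rfl le_rfl S.hab)

lemma M₂_nonneg : 0 ≤ S.M₂ :=
  le_trans (norm_nonneg _) (S.hQ2bdd S.a S.a le_rfl le_rfl S.hab)

/-- the a priori bound -/
def ρ : ℝ := 2 * S.M₁ * S.M₂ * (S.r_G + (S.b - S.a) * S.r_C)

lemma ρ_nonneg : 0 ≤ S.ρ := by
  have h1 := S.M₁_nonneg; have h2 := S.M₂_nonneg
  have h3 := S.hrG; have h4 := S.hrC; have h5 := S.hab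
  have h6 : 0 ≤ S.r_G + (S.b - S.a) * S.r_C := by nlinarith
  unfold ρ
  have : 0 ≤ 2 * S.M₁ * S.M₂ := by positivity
  exact mul_nonneg this h6

/-- the contraction constant -/
def k : ℝ := 2 * (S.b - S.a) * S.M₁ * S.M₂ * S.r_B * S.ρ

lemma k_nonneg : 0 ≤ S.k := by
  have h1 := S.M₁_nonneg; have h2 := S.M₂_nonneg
  have h3 := S.hrB; have h4 := S.hab; have h5 := S.ρ_nonneg
  have h6 : 0 ≤ S.b - S.a := by linarith
  unfold k
  have : 0 ≤ 2 * (S.b - S.a) * S.M₁ * S.M₂ * S.r_B := by positivity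
  exact mul_nonneg this h5

lemma k_lt_one : S.k < 1 := by
  have h := S.hsmall
  have : S.k = 4 * (S.b - S.a) * S.M₁ ^ 2 * S.M₂ ^ 2 * (S.r_G + (S.b - S.a) * S.r_C) * S.r_B := by
    unfold k ρ; ring
  linarith [this ▸ h]

/-- strongly continuous and bounded by `m` on `[a,b]` -/
def GoodFor (m : ℝ) (f : ℝ → X₁ →L[ℝ] X₂) : Prop :=
  (∀ x : X₁, ContinuousOn (fun t => f t x) (Set.Icc S.a S.b)) ∧
    ∀ t ∈ Set.Icc S.a S.b, ‖f t‖ ≤ m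

/-- the integrand of the Riccati integral equation -/
def integrand (f : ℝ → X₁ →L[ℝ] X₂) (t : ℝ) (x : X₁) (r : ℝ) : X₂ :=
  S.Q2 r t (S.C r (S.Q1 r t x) - f r (S.B r (f r (S.Q1 r t x))))

lemma integrand_contOn_r {m : ℝ} {f : ℝ → X₁ →L[ℝ] X₂} (hf : S.GoodFor m f)
    {t : ℝ} (ht : t ∈ Set.Icc S.a S.b) (x : X₁) :
    ContinuousOn (S.integrand f t x) (Set.Icc t S.b) := by
  have hsub : Set.Icc t S.b ⊆ Set.Icc S.a S.b := Set.Icc_subset_Icc ht.1 le_rfl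
  have h1 : ContinuousOn (fun r => S.Q1 r t x) (Set.Icc t S.b) := S.hQ1sc₁ x t ht
  have h2 : ContinuousOn (fun r => S.C r (S.Q1 r t x)) (Set.Icc t S.b) :=
    strong_comp (fun z => (S.hCsc z).mono hsub) (fun r hr => S.hC r (hsub hr)) h1
  have h3 : ContinuousOn (fun r => f r (S.Q1 r t x)) (Set.Icc t S.b) :=
    strong_comp (fun z => (hf.1 z).mono hsub) (fun r hr => hf.2 r (hsub hr)) h1
  have h4 : ContinuousOn (fun r => S.B r (f r (S.Q1 r t x))) (Set.Icc t S.b) :=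
    strong_comp (fun z => (S.hBsc z).mono hsub) (fun r hr => S.hB r (hsub hr)) h3
  have h5 : ContinuousOn (fun r => f r (S.B r (f r (S.Q1 r t x)))) (Set.Icc t S.b) :=
    strong_comp (fun z => (hf.1 z).mono hsub) (fun r hr => hf.2 r (hsub hr)) h4
  exact strong_comp (fun y => S.hQ2sc₁ y t ht)
    (fun r hr => S.hQ2bdd t r ht.1 hr.1 hr.2) (h2.sub h5)

lemma integrand_contOn_t {m : ℝ} {f : ℝ → X₁ →L[ℝ] X₂} (hf : S.GoodFor m f)
    {r : ℝ} (hr : r ∈ Set.Icc S.a S.b) (x : X₁) :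
    ContinuousOn (fun t => S.integrand f t x r) (Set.Icc S.a r) := by
  have h1 : ContinuousOn (fun t => S.Q1 r t x) (Set.Icc S.a r) := S.hQ1sc₂ x r hr
  have h2 : ContinuousOn
      (fun t => S.C r (S.Q1 r t x) - f r (S.B r (f r (S.Q1 r t x)))) (Set.Icc S.a r) :=
    ((S.C r).continuous.comp_continuousOn h1).sub
      ((f r).continuous.comp_continuousOn
        ((S.B r).continuous.comp_continuousOn
          ((f r).continuous.comp_continuousOn h1)))
  exact strong_comp (fun y => S.hQ2sc₂ y r hr)
    (fun t ht => S.hQ2bdd t r ht.1 ht.2 hr.2) h2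

lemma norm_Q1_apply_le {t r : ℝ} (ht : S.a ≤ t) (htr : t ≤ r) (hrb : r ≤ S.b) (x : X₁) :
    ‖S.Q1 r t x‖ ≤ S.M₁ * ‖x‖ :=
  le_trans ((S.Q1 r t).le_opNorm x)
    (mul_le_mul_of_nonneg_right (S.hQ1bdd t r ht htr hrb) (norm_nonneg x))

lemma integrand_norm_le {m : ℝ} {f : ℝ → X₁ →L[ℝ] X₂} (hm : 0 ≤ m)
    (hfb : ∀ t ∈ Set.Icc S.a S.b, ‖f t‖ ≤ m)
    {t r : ℝ} (ht : t ∈ Set.Icc S.a S.b) (htr : t ≤ r) (hrb : r ≤ S.b) (x : X₁) :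
    ‖S.integrand f t x r‖ ≤ S.M₂ * ((S.r_C + S.r_B * m ^ 2) * (S.M₁ * ‖x‖)) := by
  have hrmem : r ∈ Set.Icc S.a S.b := ⟨le_trans ht.1 htr, hrb⟩
  set y := S.Q1 r t x with hy
  have hyx : ‖y‖ ≤ S.M₁ * ‖x‖ := S.norm_Q1_apply_le ht.1 htr hrb x
  have hy0 : (0:ℝ) ≤ ‖y‖ := norm_nonneg _
  have hCy : ‖S.C r y‖ ≤ S.r_C * ‖y‖ :=
    le_trans ((S.C r).le_opNorm y) (mul_le_mul_of_nonneg_right (S.hC r hrmem) hy0)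
  have hfy : ‖f r y‖ ≤ m * ‖y‖ :=
    le_trans ((f r).le_opNorm y) (mul_le_mul_of_nonneg_right (hfb r hrmem) hy0)
  have hBfy : ‖S.B r (f r y)‖ ≤ S.r_B * (m * ‖y‖) :=
    le_trans ((S.B r).le_opNorm _)
      (mul_le_mul (S.hB r hrmem) hfy (norm_nonneg _) S.hrB.le)
  have hfBfy : ‖f r (S.B r (f r y))‖ ≤ m * (S.r_B * (m * ‖y‖)) :=
    le_trans ((f r).le_opNorm _)
      (mul_le_mul (hfb r hrmem) hBfy (norm_nonneg _) hm)
  have hz : ‖S.C r y - f r (S.B r (f r y))‖ ≤ (S.r_C + S.r_B * m ^ 2) * ‖y‖ := by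
    calc ‖S.C r y - f r (S.B r (f r y))‖ ≤ ‖S.C r y‖ + ‖f r (S.B r (f r y))‖ :=
          norm_sub_le _ _
      _ ≤ S.r_C * ‖y‖ + m * (S.r_B * (m * ‖y‖)) := add_le_add hCy hfBfy
      _ = (S.r_C + S.r_B * m ^ 2) * ‖y‖ := by ring
  have hz2 : ‖S.C r y - f r (S.B r (f r y))‖ ≤ (S.r_C + S.r_B * m ^ 2) * (S.M₁ * ‖x‖) := by
    refine le_trans hz (mul_le_mul_of_nonneg_left hyx ?_)
    have : (0:ℝ) ≤ S.r_B * m ^ 2 := mul_nonneg S.hrB.le (sq_nonneg m)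
    linarith [S.hrC]
  calc ‖S.integrand f t x r‖ ≤ ‖S.Q2 r t‖ * ‖S.C r y - f r (S.B r (f r y))‖ :=
        (S.Q2 r t).le_opNorm _
    _ ≤ S.M₂ * ((S.r_C + S.r_B * m ^ 2) * (S.M₁ * ‖x‖)) :=
        mul_le_mul (S.hQ2bdd t r ht.1 htr hrb) hz2 (norm_nonneg _) S.M₂_nonneg

lemma integrand_intervalIntegrable {m : ℝ} {f : ℝ → X₁ →L[ℝ] X₂} (hf : S.GoodFor m f)
    {t : ℝ} (ht : t ∈ Set.Icc S.a S.b) (x : X₁) :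
    IntervalIntegrable (S.integrand f t x) volume t S.b := by
  have h := S.integrand_contOn_r hf ht x
  apply ContinuousOn.intervalIntegrable
  rwa [Set.uIcc_of_le ht.2]

/-- the Riccati map, pointwise -/
noncomputable def PhiFun (f : ℝ → X₁ →L[ℝ] X₂) (t : ℝ) (x : X₁) : X₂ :=
  S.Q2 S.b t (S.G (S.Q1 S.b t x)) + ∫ r in t..S.b, S.integrand f t x r

lemma PhiFun_norm_le {m : ℝ} {f : ℝ → X₁ →L[ℝ] X₂} (hm : 0 ≤ m) (hf : S.GoodFor m f)
    {t : ℝ} (ht : t ∈ Set.Icc S.a S.b) (x : X₁) :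
    ‖S.PhiFun f t x‖ ≤
      (S.M₂ * (S.r_G * S.M₁) + (S.b - S.a) * (S.M₂ * ((S.r_C + S.r_B * m ^ 2) * S.M₁))) * ‖x‖ := by
  have h1 : ‖S.Q2 S.b t (S.G (S.Q1 S.b t x))‖ ≤ S.M₂ * (S.r_G * (S.M₁ * ‖x‖)) := by
    have hGx : ‖S.G (S.Q1 S.b t x)‖ ≤ S.r_G * (S.M₁ * ‖x‖) :=
      le_trans (S.G.le_opNorm _)
        (mul_le_mul S.hG (S.norm_Q1_apply_le ht.1 ht.2 le_rfl x) (norm_nonneg _) S.hrG.le)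
    exact le_trans ((S.Q2 S.b t).le_opNorm _)
      (mul_le_mul (S.hQ2bdd t S.b ht.1 ht.2 le_rfl) hGx (norm_nonneg _) S.M₂_nonneg)
  have h2 : ‖∫ r in t..S.b, S.integrand f t x r‖ ≤
      (S.M₂ * ((S.r_C + S.r_B * m ^ 2) * (S.M₁ * ‖x‖))) * (S.b - S.a) := by
    have h3 : ‖∫ r in t..S.b, S.integrand f t x r‖ ≤
        (S.M₂ * ((S.r_C + S.r_B * m ^ 2) * (S.M₁ * ‖x‖))) * |S.b - t| := by
      apply intervalIntegral.norm_integral_le_of_norm_le_const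
      intro r hr
      rw [Set.uIoc_of_le ht.2] at hr
      exact S.integrand_norm_le hm hf.2 ht hr.1.le hr.2 x
    refine le_trans h3 ?_
    rw [abs_of_nonneg (by linarith [ht.2])]
    have hC0 : 0 ≤ S.M₂ * ((S.r_C + S.r_B * m ^ 2) * (S.M₁ * ‖x‖)) := by
      have := S.M₁_nonneg; have := S.M₂_nonneg; have := S.hrB.le; have := S.hrC.le
      positivity
    exact mul_le_mul_of_nonneg_left (by linarith [ht.1]) hC0
  calc ‖S.PhiFun f t x‖ ≤ ‖S.Q2 S.b t (S.G (S.Q1 S.b t x))‖ +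
        ‖∫ r in t..S.b, S.integrand f t x r‖ := norm_add_le _ _
    _ ≤ S.M₂ * (S.r_G * (S.M₁ * ‖x‖)) +
        (S.M₂ * ((S.r_C + S.r_B * m ^ 2) * (S.M₁ * ‖x‖))) * (S.b - S.a) := add_le_add h1 h2
    _ = (S.M₂ * (S.r_G * S.M₁) + (S.b - S.a) * (S.M₂ * ((S.r_C + S.r_B * m ^ 2) * S.M₁))) * ‖x‖ :=
        by ring

lemma integrand_add {f : ℝ → X₁ →L[ℝ] X₂} (t : ℝ) (x y : X₁) :
    S.integrand f t (x + y) = fun r => S.integrand f t x r + S.integrand f t y r := by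
  funext r
  simp only [integrand, map_add]
  rw [add_sub_add_comm, map_add]

lemma integrand_smul {f : ℝ → X₁ →L[ℝ] X₂} (t : ℝ) (c : ℝ) (x : X₁) :
    S.integrand f t (c • x) = fun r => c • S.integrand f t x r := by
  funext r
  simp only [integrand, ContinuousLinearMap.map_smul]
  rw [← smul_sub, ContinuousLinearMap.map_smul]

lemma PhiFun_add {m : ℝ} {f : ℝ → X₁ →L[ℝ] X₂} (hf : S.GoodFor m f)
    {t : ℝ} (ht : t ∈ Set.Icc S.a S.b) (x y : X₁) :
    S.PhiFun f t (x + y) = S.PhiFun f t x + S.PhiFun f t y := by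
  unfold PhiFun
  rw [S.integrand_add t x y,
    intervalIntegral.integral_add (S.integrand_intervalIntegrable hf ht x)
      (S.integrand_intervalIntegrable hf ht y), map_add, map_add, map_add]
  abel

lemma PhiFun_smul {f : ℝ → X₁ →L[ℝ] X₂} (t : ℝ) (c : ℝ) (x : X₁) :
    S.PhiFun f t (c • x) = c • S.PhiFun f t x := by
  unfold PhiFun
  rw [S.integrand_smul t c x, intervalIntegral.integral_smul, ContinuousLinearMap.map_smul,
    ContinuousLinearMap.map_smul, ContinuousLinearMap.map_smul, smul_add]

/-- the Riccati map as a continuous linear operator, given goodness data -/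
noncomputable def PhiCLM {m : ℝ} {f : ℝ → X₁ →L[ℝ] X₂} (hm : 0 ≤ m) (hf : S.GoodFor m f)
    {t : ℝ} (ht : t ∈ Set.Icc S.a S.b) : X₁ →L[ℝ] X₂ :=
  LinearMap.mkContinuous
    { toFun := fun x => S.PhiFun f t x
      map_add' := fun x y => S.PhiFun_add hf ht x y
      map_smul' := fun c x => S.PhiFun_smul t c x }
    (S.M₂ * (S.r_G * S.M₁) + (S.b - S.a) * (S.M₂ * ((S.r_C + S.r_B * m ^ 2) * S.M₁)))
    (fun x => S.PhiFun_norm_le hm hf ht x)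

lemma PhiCLM_apply {m : ℝ} {f : ℝ → X₁ →L[ℝ] X₂} (hm : 0 ≤ m) (hf : S.GoodFor m f)
    {t : ℝ} (ht : t ∈ Set.Icc S.a S.b) (x : X₁) :
    S.PhiCLM hm hf ht x = S.PhiFun f t x := rfl

open Classical in
/-- the Riccati map on functions (junk value when not applicable) -/
noncomputable def Phi (f : ℝ → X₁ →L[ℝ] X₂) : ℝ → X₁ →L[ℝ] X₂ := fun t =>
  if h : S.GoodFor S.ρ f ∧ t ∈ Set.Icc S.a S.b then S.PhiCLM S.ρ_nonneg h.1 h.2 else 0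

lemma Phi_apply {f : ℝ → X₁ →L[ℝ] X₂} (hf : S.GoodFor S.ρ f)
    {t : ℝ} (ht : t ∈ Set.Icc S.a S.b) (x : X₁) :
    S.Phi f t x = S.PhiFun f t x := by
  unfold Phi
  rw [dif_pos ⟨hf, ht⟩]
  rfl

lemma PhiFun_contOn {m : ℝ} {f : ℝ → X₁ →L[ℝ] X₂} (hm : 0 ≤ m) (hf : S.GoodFor m f)
    (x : X₁) : ContinuousOn (fun t => S.PhiFun f t x) (Set.Icc S.a S.b) := by
  have hpart1 : ContinuousOn (fun t => S.Q2 S.b t (S.G (S.Q1 S.b t x))) (Set.Icc S.a S.b) := by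
    have h1 : ContinuousOn (fun t => S.Q1 S.b t x) (Set.Icc S.a S.b) :=
      S.hQ1sc₂ x S.b ⟨S.hab, le_rfl⟩
    have h2 : ContinuousOn (fun t => S.G (S.Q1 S.b t x)) (Set.Icc S.a S.b) :=
      S.G.continuous.comp_continuousOn h1
    exact strong_comp (fun y => S.hQ2sc₂ y S.b ⟨S.hab, le_rfl⟩)
      (fun t ht => S.hQ2bdd t S.b ht.1 ht.2 le_rfl) h2
  have hpart2 : ContinuousOn (fun t => ∫ r in t..S.b, S.integrand f t x r)
      (Set.Icc S.a S.b) := by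
    intro t₀ ht₀
    set μ : Measure ℝ := volume.restrict (Set.Ioc S.a S.b) with hμ
    haveI : IsFiniteMeasure μ := by
      constructor
      rw [hμ, Measure.restrict_apply_univ]
      exact measure_Ioc_lt_top
    have key : ∀ t ∈ Set.Icc S.a S.b,
        (∫ r in t..S.b, S.integrand f t x r) =
          ∫ r, (Set.Ioc t S.b).indicator (S.integrand f t x) r ∂μ := by
      intro t ht
      rw [intervalIntegral.integral_of_le ht.2, MeasureTheory.integral_indicator measurableSet_Ioc, hμ,
        Measure.restrict_restrict measurableSet_Ioc,
        Set.inter_eq_self_of_subset_left (Set.Ioc_subset_Ioc ht.1 le_rfl)]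
    rw [ContinuousWithinAt, tendsto_iff_seq_tendsto]
    intro u hu
    rw [tendsto_nhdsWithin_iff] at hu
    obtain ⟨hu1, hu2⟩ := hu
    classical
    set v : ℕ → ℝ := fun n => if u n ∈ Set.Icc S.a S.b then u n else t₀ with hv
    have hveq : ∀ᶠ n in atTop, u n = v n := hu2.mono fun n hn => by
      simp only [hv]; rw [if_pos hn]
    have hv1 : Tendsto v atTop (𝓝 t₀) := hu1.congr' hveq
    have hv2 : ∀ n, v n ∈ Set.Icc S.a S.b := fun n => by
      simp only [hv]
      by_cases h : u n ∈ Set.Icc S.a S.b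
      · rwa [if_pos h]
      · rw [if_neg h]; exact ht₀
    have main : Tendsto
        (fun n => ∫ r, (Set.Ioc (v n) S.b).indicator (S.integrand f (v n) x) r ∂μ)
        atTop (𝓝 (∫ r, (Set.Ioc t₀ S.b).indicator (S.integrand f t₀ x) r ∂μ)) := by
      apply tendsto_integral_of_dominated_convergence
        (fun _ => S.M₂ * ((S.r_C + S.r_B * m ^ 2) * (S.M₁ * ‖x‖)))
      · intro n
        rw [aestronglyMeasurable_indicator_iff measurableSet_Ioc, hμ,
          Measure.restrict_restrict measurableSet_Ioc,
          Set.inter_eq_self_of_subset_left (Set.Ioc_subset_Ioc (hv2 n).1 le_rfl)]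
        exact ((S.integrand_contOn_r hf (hv2 n) x).mono
          Set.Ioc_subset_Icc_self).aestronglyMeasurable measurableSet_Ioc
      · exact integrable_const _
      · intro n
        refine Eventually.of_forall fun r => ?_
        by_cases hr : r ∈ Set.Ioc (v n) S.b
        · rw [Set.indicator_of_mem hr]
          exact S.integrand_norm_le hm hf.2 (hv2 n) hr.1.le hr.2 x
        · rw [Set.indicator_of_notMem hr, norm_zero]
          have h1 := S.M₁_nonneg; have h2 := S.M₂_nonneg
          have h3 := S.hrC.le; have h4 := S.hrB.le
          positivity
      · have h1 : ∀ᵐ r ∂μ, r ∈ Set.Ioc S.a S.b := ae_restrict_mem measurableSet_Ioc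
        have h2 : ∀ᵐ r ∂μ, r ≠ t₀ := by
          refine ae_restrict_of_ae ?_
          rw [ae_iff]
          simp only [not_not]
          have he : {r : ℝ | r = t₀} = {t₀} := rfl
          rw [he]
          exact Real.volume_singleton
        filter_upwards [h1, h2] with r hr hne
        rcases lt_or_gt_of_ne hne with hlt | hgt
        · rw [Set.indicator_of_notMem (fun hmem => absurd hmem.1 (not_lt.mpr hlt.le))]
          have hev : ∀ᶠ n in atTop, r < v n := hv1.eventually (eventually_gt_nhds hlt)
          refine Tendsto.congr' ?_ tendsto_const_nhds
          filter_upwards [hev] with n hn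
          exact (Set.indicator_of_notMem (fun hmem => absurd hmem.1 (not_lt.mpr hn.le)) _).symm
        · have hev : ∀ᶠ n in atTop, v n < r := hv1.eventually (eventually_lt_nhds hgt)
          have hrmem : r ∈ Set.Ioc t₀ S.b := ⟨hgt, hr.2⟩
          rw [Set.indicator_of_mem hrmem]
          have hrab : r ∈ Set.Icc S.a S.b := ⟨hr.1.le, hr.2⟩
          have hcont : ContinuousWithinAt (fun t => S.integrand f t x r)
              (Set.Icc S.a r) t₀ := S.integrand_contOn_t hf hrab x t₀ (Set.mem_Icc.mpr ⟨ht₀.1, hgt.le⟩)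
          have hvr : Tendsto v atTop (𝓝[Set.Icc S.a r] t₀) := by
            rw [tendsto_nhdsWithin_iff]
            exact ⟨hv1, hev.mono fun n hn => Set.mem_Icc.mpr ⟨(hv2 n).1, hn.le⟩⟩
          have htd := Filter.Tendsto.comp hcont hvr
          refine Tendsto.congr' ?_ htd
          filter_upwards [hev] with n hn
          exact (Set.indicator_of_mem (Set.mem_Ioc.mpr ⟨hn, hr.2⟩) _).symm
    have goalrw : ∀ n, (∫ r in (v n)..S.b, S.integrand f (v n) x r) =
        ∫ r, (Set.Ioc (v n) S.b).indicator (S.integrand f (v n) x) r ∂μ :=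
      fun n => key _ (hv2 n)
    have hfin : Tendsto (fun n => ∫ r in (u n)..S.b, S.integrand f (u n) x r) atTop
        (𝓝 (∫ r in t₀..S.b, S.integrand f t₀ x r)) := by
      rw [key t₀ ht₀]
      refine Tendsto.congr' ?_ (main.congr fun n => (goalrw n).symm)
      filter_upwards [hveq] with n hn
      rw [hn]
    exact hfin
  exact hpart1.add hpart2

lemma contraction_const_le :
    S.M₂ * (S.r_G * S.M₁) + (S.b - S.a) * (S.M₂ * ((S.r_C + S.r_B * S.ρ ^ 2) * S.M₁)) ≤ S.ρ := by
  have hk := S.k_lt_one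
  have hρ := S.ρ_nonneg
  have h1 := S.M₁_nonneg; have h2 := S.M₂_nonneg
  have h3 := S.hrB.le; have h4 : 0 ≤ S.b - S.a := by linarith [S.hab]
  have hhalf : S.M₂ * (S.r_G * S.M₁) + (S.b - S.a) * (S.M₂ * (S.r_C * S.M₁)) = S.ρ / 2 := by
    unfold ρ; ring
  have hquad : (S.b - S.a) * (S.M₂ * ((S.r_B * S.ρ ^ 2) * S.M₁)) = (S.k / 2) * S.ρ := by
    unfold k; ring
  have hkρ : (S.k / 2) * S.ρ ≤ S.ρ / 2 := by nlinarith
  nlinarith [hhalf, hquad, hkρ]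

lemma good_Phi {f : ℝ → X₁ →L[ℝ] X₂} (hf : S.GoodFor S.ρ f) : S.GoodFor S.ρ (S.Phi f) := by
  constructor
  · intro x
    refine (S.PhiFun_contOn S.ρ_nonneg hf x).congr ?_
    intro t ht
    exact S.Phi_apply hf ht x
  · intro t ht
    refine ContinuousLinearMap.opNorm_le_bound _ S.ρ_nonneg fun x => ?_
    rw [S.Phi_apply hf ht x]
    refine le_trans (S.PhiFun_norm_le S.ρ_nonneg hf ht x) ?_
    exact mul_le_mul_of_nonneg_right S.contraction_const_le (norm_nonneg x)

lemma integrand_sub_norm_le {m₁ m₂ : ℝ} {f g : ℝ → X₁ →L[ℝ] X₂}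
    (hm₂ : 0 ≤ m₂)
    (hfb : ∀ t ∈ Set.Icc S.a S.b, ‖f t‖ ≤ m₁) (hgb : ∀ t ∈ Set.Icc S.a S.b, ‖g t‖ ≤ m₂)
    {t r : ℝ} (ht : t ∈ Set.Icc S.a S.b) (htr : t ≤ r) (hrb : r ≤ S.b) (x : X₁) :
    ‖S.integrand f t x r - S.integrand g t x r‖ ≤
      S.M₂ * ((S.r_B * ((m₁ + m₂) * ‖f r - g r‖)) * (S.M₁ * ‖x‖)) := by
  have hrmem : r ∈ Set.Icc S.a S.b := ⟨le_trans ht.1 htr, hrb⟩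
  set y := S.Q1 r t x with hy
  set d := ‖f r - g r‖ with hd
  have hd0 : (0:ℝ) ≤ d := norm_nonneg _
  have hyx : ‖y‖ ≤ S.M₁ * ‖x‖ := S.norm_Q1_apply_le ht.1 htr hrb x
  have hy0 : (0:ℝ) ≤ ‖y‖ := norm_nonneg _
  have hfy : ‖f r y‖ ≤ m₁ * ‖y‖ :=
    le_trans ((f r).le_opNorm y) (mul_le_mul_of_nonneg_right (hfb r hrmem) hy0)
  have hBfy : ‖S.B r (f r y)‖ ≤ S.r_B * (m₁ * ‖y‖) :=
    le_trans ((S.B r).le_opNorm _)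
      (mul_le_mul (S.hB r hrmem) hfy (norm_nonneg _) S.hrB.le)
  have k1 : ‖(f r - g r) (S.B r (f r y))‖ ≤ d * (S.r_B * (m₁ * ‖y‖)) :=
    le_trans ((f r - g r).le_opNorm _) (mul_le_mul_of_nonneg_left hBfy hd0)
  have hDy : ‖(f r - g r) y‖ ≤ d * ‖y‖ := (f r - g r).le_opNorm y
  have hBDy : ‖S.B r ((f r - g r) y)‖ ≤ S.r_B * (d * ‖y‖) :=
    le_trans ((S.B r).le_opNorm _)
      (mul_le_mul (S.hB r hrmem) hDy (norm_nonneg _) S.hrB.le)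
  have k2 : ‖g r (S.B r ((f r - g r) y))‖ ≤ m₂ * (S.r_B * (d * ‖y‖)) :=
    le_trans ((g r).le_opNorm _) (mul_le_mul (hgb r hrmem) hBDy (norm_nonneg _) hm₂)
  have hdec : f r (S.B r (f r y)) - g r (S.B r (g r y)) =
      (f r - g r) (S.B r (f r y)) + g r (S.B r ((f r - g r) y)) := by
    simp only [ContinuousLinearMap.sub_apply, map_sub]
    abel
  have hdiff : S.integrand f t x r - S.integrand g t x r =
      S.Q2 r t ((g r (S.B r (g r y)) - f r (S.B r (f r y)))) := by
    unfold integrand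
    rw [← map_sub]
    congr 1
    abel
  have hz : ‖g r (S.B r (g r y)) - f r (S.B r (f r y))‖ ≤
      (S.r_B * ((m₁ + m₂) * d)) * ‖y‖ := by
    rw [norm_sub_rev, hdec]
    calc ‖(f r - g r) (S.B r (f r y)) + g r (S.B r ((f r - g r) y))‖
        ≤ ‖(f r - g r) (S.B r (f r y))‖ + ‖g r (S.B r ((f r - g r) y))‖ := norm_add_le _ _
      _ ≤ d * (S.r_B * (m₁ * ‖y‖)) + m₂ * (S.r_B * (d * ‖y‖)) := add_le_add k1 k2
      _ = (S.r_B * ((m₁ + m₂) * d)) * ‖y‖ := by ring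
  have hz2 : ‖g r (S.B r (g r y)) - f r (S.B r (f r y))‖ ≤
      (S.r_B * ((m₁ + m₂) * d)) * (S.M₁ * ‖x‖) := by
    refine le_trans hz (mul_le_mul_of_nonneg_left hyx ?_)
    have hm₁0 : 0 ≤ m₁ := le_trans (norm_nonneg _) (hfb S.a ⟨le_rfl, S.hab⟩)
    exact mul_nonneg S.hrB.le (mul_nonneg (by linarith) hd0)
  rw [hdiff]
  exact le_trans ((S.Q2 r t).le_opNorm _)
    (mul_le_mul (S.hQ2bdd t r ht.1 htr hrb) hz2 (norm_nonneg _) S.M₂_nonneg)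

lemma PhiFun_sub_norm_le {m₁ m₂ d : ℝ} {f g : ℝ → X₁ →L[ℝ] X₂}
    (hm₂ : 0 ≤ m₂) (hf : S.GoodFor m₁ f) (hg : S.GoodFor m₂ g)
    (hd : ∀ r ∈ Set.Icc S.a S.b, ‖f r - g r‖ ≤ d)
    {t : ℝ} (ht : t ∈ Set.Icc S.a S.b) (x : X₁) :
    ‖S.PhiFun f t x - S.PhiFun g t x‖ ≤
      (S.b - S.a) * (S.M₂ * ((S.r_B * ((m₁ + m₂) * d)) * (S.M₁ * ‖x‖))) := by
  have hm₁0 : 0 ≤ m₁ := le_trans (norm_nonneg _) (hf.2 S.a ⟨le_rfl, S.hab⟩)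
  have hd0 : 0 ≤ d := le_trans (norm_nonneg _) (hd S.a ⟨le_rfl, S.hab⟩)
  have heq : S.PhiFun f t x - S.PhiFun g t x =
      ∫ r in t..S.b, (S.integrand f t x r - S.integrand g t x r) := by
    unfold PhiFun
    rw [intervalIntegral.integral_sub (S.integrand_intervalIntegrable hf ht x)
      (S.integrand_intervalIntegrable hg ht x)]
    abel
  rw [heq]
  have hbd : ∀ r ∈ Set.uIoc t S.b, ‖S.integrand f t x r - S.integrand g t x r‖ ≤
      S.M₂ * ((S.r_B * ((m₁ + m₂) * d)) * (S.M₁ * ‖x‖)) := by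
    intro r hr
    rw [Set.uIoc_of_le ht.2] at hr
    have hrmem : r ∈ Set.Icc S.a S.b := ⟨le_trans ht.1 hr.1.le, hr.2⟩
    refine le_trans (S.integrand_sub_norm_le hm₂ hf.2 hg.2 ht hr.1.le hr.2 x) ?_
    have hmono : S.r_B * ((m₁ + m₂) * ‖f r - g r‖) ≤ S.r_B * ((m₁ + m₂) * d) := by
      have hdr := hd r hrmem
      have hmm : 0 ≤ m₁ + m₂ := by linarith
      exact mul_le_mul_of_nonneg_left (mul_le_mul_of_nonneg_left hdr hmm) S.hrB.le
    have hMx : 0 ≤ S.M₁ * ‖x‖ := mul_nonneg S.M₁_nonneg (norm_nonneg x)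
    have : S.r_B * ((m₁ + m₂) * ‖f r - g r‖) * (S.M₁ * ‖x‖) ≤
        S.r_B * ((m₁ + m₂) * d) * (S.M₁ * ‖x‖) := mul_le_mul_of_nonneg_right hmono hMx
    exact mul_le_mul_of_nonneg_left this S.M₂_nonneg
  refine le_trans (intervalIntegral.norm_integral_le_of_norm_le_const hbd) ?_
  rw [abs_of_nonneg (by linarith [ht.2] : (0:ℝ) ≤ S.b - t)]
  have hC0 : 0 ≤ S.M₂ * ((S.r_B * ((m₁ + m₂) * d)) * (S.M₁ * ‖x‖)) := by
    have := S.M₁_nonneg; have := S.M₂_nonneg; have := S.hrB.le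
    have hmm : 0 ≤ m₁ + m₂ := by linarith
    positivity
  calc S.M₂ * ((S.r_B * ((m₁ + m₂) * d)) * (S.M₁ * ‖x‖)) * (S.b - t)
      ≤ S.M₂ * ((S.r_B * ((m₁ + m₂) * d)) * (S.M₁ * ‖x‖)) * (S.b - S.a) :=
        mul_le_mul_of_nonneg_left (by linarith [ht.1]) hC0
    _ = (S.b - S.a) * (S.M₂ * ((S.r_B * ((m₁ + m₂) * d)) * (S.M₁ * ‖x‖))) := by ring

lemma Phi_sub_opnorm {d : ℝ} {f g : ℝ → X₁ →L[ℝ] X₂}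
    (hf : S.GoodFor S.ρ f) (hg : S.GoodFor S.ρ g)
    (hd : ∀ r ∈ Set.Icc S.a S.b, ‖f r - g r‖ ≤ d)
    {t : ℝ} (ht : t ∈ Set.Icc S.a S.b) :
    ‖S.Phi f t - S.Phi g t‖ ≤ S.k * d := by
  have hd0 : 0 ≤ d := le_trans (norm_nonneg _) (hd S.a ⟨le_rfl, S.hab⟩)
  refine ContinuousLinearMap.opNorm_le_bound _ (mul_nonneg S.k_nonneg hd0) fun x => ?_
  rw [ContinuousLinearMap.sub_apply, S.Phi_apply hf ht x, S.Phi_apply hg ht x]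
  refine le_trans (S.PhiFun_sub_norm_le S.ρ_nonneg hf hg hd ht x) ?_
  have : (S.b - S.a) * (S.M₂ * ((S.r_B * ((S.ρ + S.ρ) * d)) * (S.M₁ * ‖x‖))) =
      (S.k * d) * ‖x‖ := by
    unfold k; ring
  rw [this]

lemma PhiFun_sub_eq {m₁ m₂ : ℝ} {f g : ℝ → X₁ →L[ℝ] X₂}
    (hf : S.GoodFor m₁ f) (hg : S.GoodFor m₂ g)
    {t : ℝ} (ht : t ∈ Set.Icc S.a S.b) (x : X₁) :
    S.PhiFun f t x - S.PhiFun g t x =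
      ∫ r in t..S.b, (S.integrand f t x r - S.integrand g t x r) := by
  unfold PhiFun
  rw [intervalIntegral.integral_sub (S.integrand_intervalIntegrable hf ht x)
    (S.integrand_intervalIntegrable hg ht x)]
  abel

end Setup
end RiccatiAux


/-- under the smallness condition
`4(b−a)M₁²M₂²(r_G + (b−a)r_C)r_B < 1`, the Riccati-type integral equation on `[a,b]`
has a unique strongly continuous solution, bounded by `2M₁M₂(r_G + (b−a)r_C)`. -/
theorem riccati_equation_unique_solution_small_interval
    {X₁ X₂ : Type*}
    [NormedAddCommGroup X₁] [NormedSpace ℝ X₁] [CompleteSpace X₁]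
    [NormedAddCommGroup X₂] [NormedSpace ℝ X₂] [CompleteSpace X₂]
    (a b : ℝ) (hab : a ≤ b)
    -- uniformly bounded families Q⁽¹⁾, Q⁽²⁾, strongly continuous in each variable
    (Q1 : ℝ → ℝ → X₁ →L[ℝ] X₁) (Q2 : ℝ → ℝ → X₂ →L[ℝ] X₂)
    (M₁ M₂ : ℝ)
    (hQ1bdd : ∀ t s : ℝ, a ≤ t → t ≤ s → s ≤ b → ‖Q1 s t‖ ≤ M₁)
    (hQ2bdd : ∀ t s : ℝ, a ≤ t → t ≤ s → s ≤ b → ‖Q2 s t‖ ≤ M₂)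
    (hQ1sc₁ : ∀ x : X₁, ∀ t ∈ Set.Icc a b, ContinuousOn (fun s => Q1 s t x) (Set.Icc t b))
    (hQ1sc₂ : ∀ x : X₁, ∀ s ∈ Set.Icc a b, ContinuousOn (fun t => Q1 s t x) (Set.Icc a s))
    (hQ2sc₁ : ∀ y : X₂, ∀ t ∈ Set.Icc a b, ContinuousOn (fun s => Q2 s t y) (Set.Icc t b))
    (hQ2sc₂ : ∀ y : X₂, ∀ s ∈ Set.Icc a b, ContinuousOn (fun t => Q2 s t y) (Set.Icc a s))
    -- coefficient B with sup-norm bound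
    (B : ℝ → X₂ →L[ℝ] X₁)
    (hBsc : ∀ y : X₂, ContinuousOn (fun t => B t y) (Set.Icc a b))
    (nB : ℝ) (hnB : ∀ t ∈ Set.Icc a b, ‖B t‖ ≤ nB)
    -- coefficient C and terminal operator G with bounds
    (C : ℝ → X₁ →L[ℝ] X₂)
    (hCsc : ∀ x : X₁, ContinuousOn (fun t => C t x) (Set.Icc a b))
    (G : X₁ →L[ℝ] X₂)
    (r_B r_C r_G : ℝ)
    (hrB : 0 < r_B) (hrC : 0 < r_C) (hrG : 0 < r_G)
    (hG : ‖G‖ ≤ r_G) (hC : ∀ t ∈ Set.Icc a b, ‖C t‖ ≤ r_C)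
    (hB : ∀ t ∈ Set.Icc a b, ‖B t‖ ≤ r_B)
    (hsmall : 4 * (b - a) * M₁ ^ 2 * M₂ ^ 2 * (r_G + (b - a) * r_C) * r_B < 1) :
    ∃ P : ℝ → X₁ →L[ℝ] X₂,
      (∀ x : X₁, ContinuousOn (fun t => P t x) (Set.Icc a b)) ∧
      (∀ t ∈ Set.Icc a b, ‖P t‖ ≤ 2 * M₁ * M₂ * (r_G + (b - a) * r_C)) ∧
      (∀ t ∈ Set.Icc a b, ∀ x : X₁,
        P t x = Q2 b t (G (Q1 b t x)) +
          ∫ r in t..b, Q2 r t (C r (Q1 r t x) - P r (B r (P r (Q1 r t x))))) ∧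
      (∀ P' : ℝ → X₁ →L[ℝ] X₂,
        (∀ x : X₁, ContinuousOn (fun t => P' t x) (Set.Icc a b)) →
        (∀ t ∈ Set.Icc a b, ∀ x : X₁,
          P' t x = Q2 b t (G (Q1 b t x)) +
            ∫ r in t..b, Q2 r t (C r (Q1 r t x) - P' r (B r (P' r (Q1 r t x))))) →
        ∀ t ∈ Set.Icc a b, P' t = P t) := by
  classical
  set S : RiccatiAux.Setup X₁ X₂ :=
    { a := a, b := b, hab := hab, Q1 := Q1, Q2 := Q2, M₁ := M₁, M₂ := M₂,
      hQ1bdd := hQ1bdd, hQ2bdd := hQ2bdd, hQ1sc₁ := hQ1sc₁, hQ1sc₂ := hQ1sc₂,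
      hQ2sc₁ := hQ2sc₁, hQ2sc₂ := hQ2sc₂, B := B, hBsc := hBsc, C := C, hCsc := hCsc,
      G := G, r_B := r_B, r_C := r_C, r_G := r_G, hrB := hrB, hrC := hrC, hrG := hrG,
      hG := hG, hC := hC, hB := hB, hsmall := hsmall } with hS
  -- the Picard iterates
  set seq : ℕ → ℝ → X₁ →L[ℝ] X₂ := fun n => (fun f => S.Phi f)^[n] (fun _ => 0) with hseq
  have hseq_succ : ∀ n, seq (n + 1) = S.Phi (seq n) := by
    intro n
    simp only [hseq]
    rw [Function.iterate_succ_apply']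
  have hGood0 : S.GoodFor S.ρ (fun _ => (0 : X₁ →L[ℝ] X₂)) := by
    constructor
    · intro x
      simp only [ContinuousLinearMap.zero_apply]
      exact continuousOn_const
    · intro t _
      simp only [norm_zero]
      exact S.ρ_nonneg
  have hgood : ∀ n, S.GoodFor S.ρ (seq n) := by
    intro n
    induction n with
    | zero => exact hGood0
    | succ n ih => rw [hseq_succ n]; exact S.good_Phi ih
  -- geometric estimate
  have hstep : ∀ n, ∀ t ∈ Set.Icc a b, ‖seq n t - seq (n + 1) t‖ ≤ S.ρ * S.k ^ n := by
    intro n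
    induction n with
    | zero =>
      intro t ht
      have h0 : seq 0 t = 0 := rfl
      rw [h0, zero_sub, norm_neg, pow_zero, mul_one]
      exact (hgood 1).2 t ht
    | succ n ih =>
      intro t ht
      rw [hseq_succ n, hseq_succ (n + 1)]
      refine le_trans (S.Phi_sub_opnorm (d := S.ρ * S.k ^ n) (hgood n) (hgood (n + 1))
        (fun r hr => ih r hr) ht) ?_
      exact le_of_eq (by rw [pow_succ]; ring)
  have hcauchy : ∀ t ∈ Set.Icc a b, CauchySeq (fun n => seq n t) :=
    fun t ht => cauchySeq_of_le_geometric S.k S.ρ S.k_lt_one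
      (fun n => by rw [dist_eq_norm]; exact hstep n t ht)
  have hex : ∀ t : ℝ, ∃ L : X₁ →L[ℝ] X₂,
      t ∈ Set.Icc a b → Filter.Tendsto (fun n => seq n t) Filter.atTop (nhds L) := by
    intro t
    by_cases ht : t ∈ Set.Icc a b
    · obtain ⟨L, hL⟩ := cauchySeq_tendsto_of_complete (hcauchy t ht)
      exact ⟨L, fun _ => hL⟩
    · exact ⟨0, fun h => absurd h ht⟩
  choose P hP using hex
  have htend : ∀ t ∈ Set.Icc a b,
      Filter.Tendsto (fun n => seq n t) Filter.atTop (nhds (P t)) := fun t ht => hP t ht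
  have hdist : ∀ n, ∀ t ∈ Set.Icc a b, ‖seq n t - P t‖ ≤ S.ρ * S.k ^ n / (1 - S.k) := by
    intro n t ht
    rw [← dist_eq_norm]
    exact dist_le_of_le_geometric_of_tendsto S.k S.ρ S.k_lt_one
      (fun j => by rw [dist_eq_norm]; exact hstep j t ht) (htend t ht) n
  have happly : ∀ t ∈ Set.Icc a b, ∀ x : X₁,
      Filter.Tendsto (fun n => seq n t x) Filter.atTop (nhds (P t x)) := by
    intro t ht x
    have h0 : Filter.Tendsto (fun n => ‖seq n t - P t‖) Filter.atTop (nhds 0) := by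
      rw [← tendsto_iff_norm_sub_tendsto_zero]
      exact htend t ht
    have h1 : Filter.Tendsto (fun n => seq n t x - P t x) Filter.atTop (nhds 0) := by
      have hbnd : ∀ n, ‖seq n t x - P t x‖ ≤ ‖seq n t - P t‖ * ‖x‖ := fun n => by
        rw [← ContinuousLinearMap.sub_apply]
        exact ContinuousLinearMap.le_opNorm _ _
      have hg : Filter.Tendsto (fun n => ‖seq n t - P t‖ * ‖x‖) Filter.atTop (nhds 0) := by
        simpa using h0.mul_const ‖x‖
      exact squeeze_zero_norm hbnd hg
    have := h1.add_const (P t x)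
    simpa using this
  have hdn : Filter.Tendsto (fun n : ℕ => S.ρ * S.k ^ n / (1 - S.k)) Filter.atTop (nhds 0) := by
    have hg := tendsto_pow_atTop_nhds_zero_of_lt_one S.k_nonneg S.k_lt_one
    have := (hg.const_mul S.ρ).div_const (1 - S.k)
    simpa using this
  have hbound : ∀ t ∈ Set.Icc a b, ‖P t‖ ≤ S.ρ := by
    intro t ht
    refine ContinuousLinearMap.opNorm_le_bound _ S.ρ_nonneg fun x => ?_
    refine le_of_tendsto ((happly t ht x).norm) (Filter.Eventually.of_forall fun n => ?_)
    exact le_trans ((seq n t).le_opNorm x)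
      (mul_le_mul_of_nonneg_right ((hgood n).2 t ht) (norm_nonneg x))
  have hPcont : ∀ x : X₁, ContinuousOn (fun t => P t x) (Set.Icc a b) := by
    intro x
    have hunif : TendstoUniformlyOn (fun n t => seq n t x) (fun t => P t x)
        Filter.atTop (Set.Icc a b) := by
      rw [Metric.tendstoUniformlyOn_iff]
      intro ε hε
      have h0 : Filter.Tendsto (fun n : ℕ => S.ρ * S.k ^ n / (1 - S.k) * ‖x‖)
          Filter.atTop (nhds 0) := by simpa using hdn.mul_const ‖x‖
      filter_upwards [h0.eventually (gt_mem_nhds hε)] with n hn t ht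
      rw [dist_comm, dist_eq_norm]
      calc ‖seq n t x - P t x‖ ≤ ‖seq n t - P t‖ * ‖x‖ := by
            rw [← ContinuousLinearMap.sub_apply]; exact ContinuousLinearMap.le_opNorm _ _
        _ ≤ S.ρ * S.k ^ n / (1 - S.k) * ‖x‖ :=
            mul_le_mul_of_nonneg_right (hdist n t ht) (norm_nonneg x)
        _ < ε := hn
    exact hunif.continuousOn (Filter.Eventually.of_forall fun n => (hgood n).1 x).frequently
  have hPgood : S.GoodFor S.ρ P := ⟨hPcont, hbound⟩
  -- P is a fixed point
  have hfix : ∀ t ∈ Set.Icc a b, ∀ x : X₁, P t x = S.PhiFun P t x := by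
    intro t ht x
    have h1 : Filter.Tendsto (fun n => S.PhiFun (seq n) t x) Filter.atTop
        (nhds (S.PhiFun P t x)) := by
      have h2 : Filter.Tendsto (fun n => S.PhiFun (seq n) t x - S.PhiFun P t x)
          Filter.atTop (nhds 0) := by
        have hbnd : ∀ n, ‖S.PhiFun (seq n) t x - S.PhiFun P t x‖ ≤ (S.b - S.a) * (S.M₂ * ((S.r_B *
            ((S.ρ + S.ρ) * (S.ρ * S.k ^ n / (1 - S.k)))) * (S.M₁ * ‖x‖))) := fun n =>
          S.PhiFun_sub_norm_le S.ρ_nonneg (hgood n) hPgood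
            (fun r hr => hdist n r hr) ht x
        refine squeeze_zero_norm hbnd ?_
        have heqf : (fun n : ℕ => (S.b - S.a) * (S.M₂ * ((S.r_B *
              ((S.ρ + S.ρ) * (S.ρ * S.k ^ n / (1 - S.k)))) * (S.M₁ * ‖x‖)))) =
              fun n : ℕ => (S.ρ * S.k ^ n / (1 - S.k)) *
                ((S.b - S.a) * (S.M₂ * ((S.r_B * (S.ρ + S.ρ)) * (S.M₁ * ‖x‖)))) := by
            funext n; ring
        rw [heqf]
        simpa using hdn.mul_const _
      have := h2.add_const (S.PhiFun P t x)
      simpa using this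
    have h3 : Filter.Tendsto (fun n => seq (n + 1) t x) Filter.atTop (nhds (P t x)) :=
      (happly t ht x).comp (Filter.tendsto_add_atTop_nat 1)
    have h4 : (fun n => seq (n + 1) t x) = fun n => S.PhiFun (seq n) t x := by
      funext n
      rw [hseq_succ n]
      exact S.Phi_apply (hgood n) ht x
    rw [h4] at h3
    exact tendsto_nhds_unique h3 h1
  refine ⟨P, hPcont, hbound, fun t ht x => hfix t ht x, ?_⟩
  -- uniqueness
  intro P' hP'cont hP'eq t ht
  obtain ⟨m', hm'⟩ : ∃ c : ℝ, ∀ s : Set.Icc a b, ‖P' s.1‖ ≤ c := by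
    apply banach_steinhaus (g := fun s : Set.Icc a b => P' s.1)
    intro x
    obtain ⟨c, hc⟩ := (isCompact_Icc (a := a) (b := b)).exists_bound_of_continuousOn
      (hP'cont x)
    exact ⟨c, fun s => hc s.1 s.2⟩
  set m : ℝ := max m' S.ρ with hm
  have hm0 : 0 ≤ m := le_trans S.ρ_nonneg (le_max_right _ _)
  have hP'good : S.GoodFor m P' :=
    ⟨hP'cont, fun r hr => le_trans (hm' ⟨r, hr⟩) (le_max_left _ _)⟩
  have hPgood' : S.GoodFor m P := ⟨hPcont, fun r hr => le_trans (hbound r hr) (le_max_right _ _)⟩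
  set K : ℝ := S.M₂ * S.r_B * (m + m) * S.M₁ with hK
  have hK0 : 0 ≤ K := by
    rw [hK]
    have h1 := S.M₁_nonneg; have h2 := S.M₂_nonneg
    have h3 := S.hrB.le
    positivity
  -- the key iterated estimate
  have claim : ∀ n : ℕ, ∀ t ∈ Set.Icc a b,
      ‖P' t - P t‖ ≤ 2 * m * (K ^ n * (b - t) ^ n / (n.factorial : ℝ)) := by
    intro n
    induction n with
    | zero =>
      intro t ht
      simp only [pow_zero, Nat.factorial_zero, Nat.cast_one, one_mul, mul_one, div_one]
      calc ‖P' t - P t‖ ≤ ‖P' t‖ + ‖P t‖ := norm_sub_le _ _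
        _ ≤ 2 * m := by
            have h1 := hP'good.2 t ht
            have h2 := hPgood'.2 t ht
            linarith
    | succ n ih =>
      intro t ht
      have hbt : 0 ≤ b - t := by linarith [ht.2]
      have hrhs0 : 0 ≤ 2 * m * (K ^ (n + 1) * (b - t) ^ (n + 1) / ((n + 1).factorial : ℝ)) := by
        have hf0 : (0:ℝ) < ((n + 1).factorial : ℝ) := by
          exact_mod_cast Nat.factorial_pos (n + 1)
        positivity
      refine ContinuousLinearMap.opNorm_le_bound _ hrhs0 fun x => ?_
      have hEP' : P' t x = S.PhiFun P' t x := hP'eq t ht x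
      have hEP : P t x = S.PhiFun P t x := hfix t ht x
      have heq : (P' t - P t) x =
          ∫ r in t..b, (S.integrand P' t x r - S.integrand P t x r) := by
        rw [ContinuousLinearMap.sub_apply, hEP', hEP]
        exact S.PhiFun_sub_eq hP'good hPgood' ht x
      rw [heq]
      set c : ℝ := K ^ (n + 1) * (2 * m) * ‖x‖ / (n.factorial : ℝ) with hc
      have hc0 : 0 ≤ c := by
        rw [hc]
        have hf0 : (0:ℝ) < (n.factorial : ℝ) := by exact_mod_cast Nat.factorial_pos n
        positivity
      have hptw : ∀ᵐ r ∂(volume.restrict (Set.uIoc t b)),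
          ‖S.integrand P' t x r - S.integrand P t x r‖ ≤ c * (b - r) ^ n := by
        refine (MeasureTheory.ae_restrict_mem measurableSet_uIoc).mono fun r hr => ?_
        rw [Set.uIoc_of_le ht.2] at hr
        have hrmem : r ∈ Set.Icc a b := ⟨le_trans ht.1 hr.1.le, hr.2⟩
        have h1 := S.integrand_sub_norm_le hm0 hP'good.2 hPgood'.2 ht hr.1.le hr.2 x
        have h2 := ih r hrmem
        have h3 : S.M₂ * ((S.r_B * ((m + m) * ‖P' r - P r‖)) * (S.M₁ * ‖x‖)) ≤
            S.M₂ * ((S.r_B * ((m + m) * (2 * m * (K ^ n * (b - r) ^ n /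
              (n.factorial : ℝ))))) * (S.M₁ * ‖x‖)) := by
          have hmm : (0:ℝ) ≤ m + m := by linarith
          have i1 : (m + m) * ‖P' r - P r‖ ≤
              (m + m) * (2 * m * (K ^ n * (b - r) ^ n / (n.factorial : ℝ))) :=
            mul_le_mul_of_nonneg_left h2 hmm
          have i2 := mul_le_mul_of_nonneg_left i1 S.hrB.le
          have i3 := mul_le_mul_of_nonneg_right i2
            (mul_nonneg S.M₁_nonneg (norm_nonneg x))
          exact mul_le_mul_of_nonneg_left i3 S.M₂_nonneg
        refine le_trans h1 (le_trans h3 (le_of_eq ?_))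
        rw [hc, hK]
        ring
      have hcont_bound : IntervalIntegrable (fun r => c * (b - r) ^ n) volume t b := by
        apply Continuous.intervalIntegrable
        exact continuous_const.mul ((continuous_const.sub continuous_id).pow n)
      have hni := intervalIntegral.norm_integral_le_abs_of_norm_le hptw hcont_bound
      refine le_trans hni (le_of_eq ?_)
      have hint : (∫ r in t..b, c * (b - r) ^ n) = c * ((b - t) ^ (n + 1) / (n + 1)) := by
        rw [intervalIntegral.integral_const_mul]
        congr 1
        have hcs := intervalIntegral.integral_comp_sub_left (a := t) (b := b)
          (fun u => u ^ n) b
        rw [hcs, sub_self, integral_pow, zero_pow (Nat.succ_ne_zero n), sub_zero]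
      rw [hint]
      have hfacts : ((n + 1).factorial : ℝ) = ((n : ℝ) + 1) * (n.factorial : ℝ) := by
        rw [Nat.factorial_succ]
        push_cast
        ring
      have hfne : (n.factorial : ℝ) ≠ 0 := by
        exact_mod_cast (Nat.factorial_pos n).ne'
      have hn1 : ((n : ℝ) + 1) ≠ 0 := by positivity
      rw [abs_of_nonneg (by positivity)]
      rw [hc, hfacts]
      field_simp
  -- conclude
  have hzero : ‖P' t - P t‖ ≤ 0 := by
    have hbt : 0 ≤ b - t := by linarith [ht.2]
    have hT : Filter.Tendsto
        (fun n : ℕ => 2 * m * ((K * (b - t)) ^ n / (n.factorial : ℝ)))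
        Filter.atTop (nhds 0) := by
      have := (FloorSemiring.tendsto_pow_div_factorial_atTop (K * (b - t))).const_mul (2 * m)
      simpa using this
    refine ge_of_tendsto hT (Filter.Eventually.of_forall fun n => ?_)
    have hcl := claim n t ht
    calc ‖P' t - P t‖ ≤ 2 * m * (K ^ n * (b - t) ^ n / (n.factorial : ℝ)) := hcl
      _ = 2 * m * ((K * (b - t)) ^ n / (n.factorial : ℝ)) := by rw [mul_pow K (b - t) n]
  exact sub_eq_zero.mp (norm_le_zero_iff.mp hzero)
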